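/- Generating function identity: for a Ferrers board B = B(c_1,…,c_n), Σ_{k=0}^n T_{n-k}(B;q) x^k / Π_{i=0}^n (1 - x q^i) = Σ_{k=0}^∞ x^k Π_{i=1}^n [k + c_i - i + 1]_q, as an identity of formal power series in x over Q(q). -/

import Mathlib

open Finset
open scoped Classical

noncomputable section

variable {R : Type*} [CommRing R]

/-- The q-integer `[m]_q = 1 + q + ... + q^{m-1}`. -/
def qint (q : R) (m : ℕ) : R := ∑ i ∈ Finset.range m, q ^ i

/-- The q-factorial `[m]_q!`. -/
def qfact (q : R) (m : ℕ) : R := ∏ i ∈ Finset.range m, qint q (i + 1)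

/-- A Ferrers board inside the `n × n` grid, given by column heights `c`:
square `(i,j)` (0-based row `i`, column `j`) belongs to the board iff `i < c j`. -/
def IsFerrers (n : ℕ) (c : Fin n → ℕ) : Prop := Monotone c ∧ ∀ j, c j ≤ n

/-- The squares of the Ferrers board with column heights `c`. -/
def boardSq (n : ℕ) (c : Fin n → ℕ) : Finset (Fin n × Fin n) :=
  Finset.univ.filter fun s => (s.1 : ℕ) < c s.2

/-- A set of rooks is non-attacking when no two share a row or a column. -/
def NonAttacking {n : ℕ} (C : Finset (Fin n × Fin n)) : Prop :=
  ∀ r ∈ C, ∀ r' ∈ C, r ≠ r' → r.1 ≠ r'.1 ∧ r.2 ≠ r'.2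

/-- Placements of `k` non-attacking rooks on the Ferrers board. -/
def placements (n : ℕ) (c : Fin n → ℕ) (k : ℕ) : Finset (Finset (Fin n × Fin n)) :=
  Finset.univ.filter fun C => C.card = k ∧ C ⊆ boardSq n c ∧ NonAttacking C

/-- `inv(C,B)`: the number of squares of the board that do not contain a rook and
are not above (smaller row index, same column) nor to the right of (same row,
larger column index) any rook of `C`. -/
def rookInv (n : ℕ) (c : Fin n → ℕ) (C : Finset (Fin n × Fin n)) : ℕ :=
  ((boardSq n c).filter fun s => s ∉ C ∧ ∀ r ∈ C,
    ¬(r.2 = s.2 ∧ s.1 < r.1) ∧ ¬(r.1 = s.1 ∧ r.2 < s.2)).card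

/-- The Garsia–Remmel q-rook polynomial `R_k(B;q)`. -/
def qRook (q : R) (n : ℕ) (c : Fin n → ℕ) (k : ℕ) : R :=
  ∑ C ∈ placements n c k, q ^ rookInv n c C

/-- The polynomial (in `x`) `∑_{j=0}^n [j]_q! R_{n-j}(B;q) ∏_{i=j+1}^n (x - q^i)`. -/
def hitGen (q : R) (n : ℕ) (c : Fin n → ℕ) : Polynomial R :=
  ∑ j ∈ Finset.range (n + 1),
    Polynomial.C (qfact q j * qRook q n c (n - j)) *
      ∏ i ∈ Finset.Icc (j + 1) n, (Polynomial.X - Polynomial.C (q ^ i))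

/-- The Garsia–Remmel q-hit polynomial `T_k(B;q)`, defined by
`∑_{j=0}^n [j]_q! R_{n-j}(B;q) ∏_{i=j+1}^n (x - q^i) = ∑_k T_k(B;q) x^k`. -/
def qHit (q : R) (n : ℕ) (c : Fin n → ℕ) (k : ℕ) : R := (hitGen q n c).coeff k

/-- Placements of `n` non-attacking rooks on the full `n × n` grid with exactly
`k` rooks on the board. -/
def fullPlacements (n : ℕ) (c : Fin n → ℕ) (k : ℕ) : Finset (Finset (Fin n × Fin n)) :=
  Finset.univ.filter fun C => C.card = n ∧ NonAttacking C ∧ (C ∩ boardSq n c).card = k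

end

/-- `[m]_q` for `m : ℤ`, with the convention that it vanishes for `m ≤ 0`. -/
noncomputable def qbrkPos (q : ℚ) (m : ℤ) : ℚ :=
  if 0 < m then ∑ i ∈ Finset.range m.toNat, q ^ i else 0

/- ======================= auxiliary development ======================= -/
noncomputable section
open Polynomial PowerSeries

namespace GR18

variable (q : ℚ)

def qfall (q : ℚ) (k j : ℕ) : ℚ := ∏ t ∈ Finset.range j, qint q (k - t)

lemma qint_add (a b : ℕ) : qint q (a + b) = qint q a + q ^ a * qint q b := by
  simp [qint, Finset.sum_range_add, Finset.mul_sum, pow_add]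

lemma qbrk_natCast (a : ℕ) : qbrkPos q (a : ℤ) = qint q a := by
  unfold qbrkPos qint
  rcases Nat.eq_zero_or_pos a with h | h
  · simp [h]
  · rw [if_pos (by exact_mod_cast h)]
    simp

lemma qfall_succ (k j : ℕ) : qfall q k (j + 1) = qfall q k j * qint q (k - j) :=
  Finset.prod_range_succ _ _

lemma qfall_of_lt {k j : ℕ} (h : k < j) : qfall q k j = 0 := by
  apply Finset.prod_eq_zero (Finset.mem_range.mpr h)
  simp [qint]

lemma qfall_succ_fst (k j : ℕ) :
    qfall q (k + 1) (j + 1) = qint q (k + 1) * qfall q k j := by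
  rw [qfall, Finset.prod_range_succ']
  simp only [Nat.succ_sub_succ]
  rw [mul_comm]
  rfl

lemma sum_pow_filter_lt {α : Type*} [LinearOrder α] (A : Finset α) :
    ∑ a ∈ A, q ^ (A.filter fun b => a < b).card = ∑ i ∈ Finset.range A.card, q ^ i := by
  suffices h : ∀ m (A : Finset α), A.card = m →
      ∑ a ∈ A, q ^ (A.filter fun b => a < b).card = ∑ i ∈ Finset.range A.card, q ^ i by
    exact h _ A rfl
  intro m
  induction m with
  | zero => intro A hA; simp [Finset.card_eq_zero.mp hA]
  | succ m ih =>
    intro A hA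
    have hne : A.Nonempty := Finset.card_pos.mp (by omega)
    set M := A.max' hne with hM
    have hMA : M ∈ A := A.max'_mem hne
    rw [← Finset.add_sum_erase _ _ hMA]
    have h1 : (A.filter fun b => M < b).card = 0 := by
      rw [Finset.card_eq_zero]
      ext b
      simp only [Finset.mem_filter, Finset.notMem_empty, iff_false, not_and]
      intro hb
      exact not_lt.mpr (A.le_max' b hb)
    have h2 : ∀ a ∈ A.erase M, (A.filter fun b => a < b).card
        = ((A.erase M).filter fun b => a < b).card + 1 := by
      intro a ha
      have haM : a < M := lt_of_le_of_ne (A.le_max' a (Finset.mem_of_mem_erase ha))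
        (Finset.ne_of_mem_erase ha)
      have : A.filter (fun b => a < b) = insert M ((A.erase M).filter fun b => a < b) := by
        ext b
        simp only [Finset.mem_filter, Finset.mem_insert, Finset.mem_erase]
        constructor
        · rintro ⟨hb, hab⟩
          by_cases hbM : b = M
          · exact Or.inl hbM
          · exact Or.inr ⟨⟨hbM, hb⟩, hab⟩
        · rintro (rfl | ⟨⟨_, hb⟩, hab⟩)
          · exact ⟨hMA, haM⟩
          · exact ⟨hb, hab⟩
      rw [this, Finset.card_insert_of_notMem (by simp)]
    rw [h1, pow_zero, Finset.sum_congr rfl (fun a ha => by rw [h2 a ha])]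
    have hcard : (A.erase M).card = m := by rw [Finset.card_erase_of_mem hMA, hA]; omega
    have := ih (A.erase M) hcard
    rw [hcard] at this
    rw [hA]
    calc 1 + ∑ a ∈ A.erase M, q ^ (((A.erase M).filter fun b => a < b).card + 1)
        = 1 + q * ∑ a ∈ A.erase M, q ^ ((A.erase M).filter fun b => a < b).card := by
          rw [Finset.mul_sum]; congr 1; apply Finset.sum_congr rfl; intro a _; ring
      _ = 1 + q * ∑ i ∈ Finset.range m, q ^ i := by rw [this]
      _ = ∑ i ∈ Finset.range (m + 1), q ^ i := by
          rw [Finset.sum_range_succ', Finset.mul_sum]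
          simp [pow_succ, add_comm, mul_comm]

/- ---------------- board combinatorics ---------------- -/

variable {n : ℕ} (c : Fin n → ℕ)

def trunc (t : ℕ) : Finset (Fin n × Fin n) :=
  Finset.univ.filter fun s => (s.2 : ℕ) < t ∧ (s.1 : ℕ) < c s.2

def plc (t k : ℕ) : Finset (Finset (Fin n × Fin n)) :=
  Finset.univ.filter fun C => C.card = k ∧ C ⊆ trunc c t ∧ NonAttacking C

def tinv (t : ℕ) (C : Finset (Fin n × Fin n)) : ℕ :=
  ((trunc c t).filter fun s => s ∉ C ∧ ∀ r ∈ C,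
    ¬(r.2 = s.2 ∧ s.1 < r.1) ∧ ¬(r.1 = s.1 ∧ r.2 < s.2)).card

def tR (t k : ℕ) : ℚ := ∑ C ∈ plc c t k, q ^ tinv c t C

lemma mem_plc {t k : ℕ} {C : Finset (Fin n × Fin n)} :
    C ∈ plc c t k ↔ C.card = k ∧ C ⊆ trunc c t ∧ NonAttacking C := by
  simp [plc]

lemma trunc_n_eq : trunc c n = boardSq n c := by
  unfold trunc boardSq
  apply Finset.filter_congr
  intro s _
  simp [s.2.isLt]

lemma tR_n_eq (k : ℕ) : tR q c n k = qRook q n c k := by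
  unfold tR qRook plc placements tinv rookInv
  rw [trunc_n_eq]

def rowset (C : Finset (Fin n × Fin n)) : Finset (Fin n) := C.image Prod.fst

lemma rowset_card {C : Finset (Fin n × Fin n)} (hC : NonAttacking C) :
    (rowset C).card = C.card := by
  apply Finset.card_image_of_injOn
  intro r hr r' hr' h
  by_contra hne
  exact (hC r hr r' hr' hne).1 h

lemma plc_empty_col {t k : ℕ} (h : t < k) : plc c t k = ∅ := by
  rw [Finset.eq_empty_iff_forall_notMem]
  intro C hC
  rw [mem_plc] at hC
  obtain ⟨hcard, hsub, hna⟩ := hC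
  have hinj : (C.image Prod.snd).card = C.card := by
    apply Finset.card_image_of_injOn
    intro r hr r' hr' hx
    by_contra hne
    exact (hna r hr r' hr' hne).2 hx
  have hsubc : C.image Prod.snd ⊆ Finset.univ.filter fun j : Fin n => (j : ℕ) < t := by
    intro j hj
    obtain ⟨r, hr, rfl⟩ := Finset.mem_image.mp hj
    have := hsub hr
    simp only [trunc, Finset.mem_filter] at this
    simp [this.2.1]
  have hle := Finset.card_le_card hsubc
  have : (Finset.univ.filter fun j : Fin n => (j : ℕ) < t).card ≤ t := by
    calc (Finset.univ.filter fun j : Fin n => (j : ℕ) < t).card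
        = ((Finset.univ.filter fun j : Fin n => (j : ℕ) < t).image Fin.val).card :=
          (Finset.card_image_of_injective _ Fin.val_injective).symm
      _ ≤ (Finset.range t).card := Finset.card_le_card (by
          intro x hx
          obtain ⟨j, hj, rfl⟩ := Finset.mem_image.mp hx
          simp only [Finset.mem_filter] at hj
          simp [hj.2])
      _ = t := Finset.card_range t
  omega

lemma rowset_subset (hmono : Monotone c) {t k : ℕ} {C : Finset (Fin n × Fin n)}
    (hC : C ∈ plc c t k) {T : Fin n} (hT : (T : ℕ) = t) :
    ∀ r ∈ C, (r.1 : ℕ) < c T := by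
  rw [mem_plc] at hC
  intro r hr
  have hrt := hC.2.1 hr
  simp only [trunc, Finset.mem_filter] at hrt
  have h1 : (r.1 : ℕ) < c r.2 := hrt.2.2
  have h2 : c r.2 ≤ c T := hmono (le_of_lt (Fin.lt_def.mpr (by
    have : (r.2 : ℕ) < t := hrt.2.1
    omega)))
  omega

lemma plc_empty_row (hmono : Monotone c) {t k : ℕ} {T : Fin n}
    (hT : (T : ℕ) = t) (h : c T < k) : plc c t k = ∅ := by
  rw [Finset.eq_empty_iff_forall_notMem]
  intro C hC
  have hrows := rowset_subset c hmono hC hT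
  rw [mem_plc] at hC
  obtain ⟨hcard, hsub, hna⟩ := hC
  have h1 : (rowset C).card = k := by rw [rowset_card hna, hcard]
  have h2 : rowset C ⊆ Finset.univ.filter fun b : Fin n => (b : ℕ) < c T := by
    intro b hb
    obtain ⟨r, hr, rfl⟩ := Finset.mem_image.mp hb
    simp [hrows r hr]
  have h3 : (Finset.univ.filter fun b : Fin n => (b : ℕ) < c T).card ≤ c T := by
    calc (Finset.univ.filter fun b : Fin n => (b : ℕ) < c T).card
        = ((Finset.univ.filter fun b : Fin n => (b : ℕ) < c T).image Fin.val).card :=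
          (Finset.card_image_of_injective _ Fin.val_injective).symm
      _ ≤ (Finset.range (c T)).card := Finset.card_le_card (by
          intro x hx
          obtain ⟨j, hj, rfl⟩ := Finset.mem_image.mp hx
          simp only [Finset.mem_filter] at hj
          simp [hj.2])
      _ = c T := Finset.card_range _
  have := Finset.card_le_card h2
  omega

/-- the available rows for a new rook in column `T` -/
def avail (d : ℕ) (C : Finset (Fin n × Fin n)) : Finset (Fin n) :=
  Finset.univ.filter fun a => (a : ℕ) < d ∧ a ∉ rowset C

lemma avail_card (hmono : Monotone c) (hub : ∀ j, c j ≤ n) {t k : ℕ} {T : Fin n}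
    (hT : (T : ℕ) = t) {C : Finset (Fin n × Fin n)} (hC : C ∈ plc c t k) :
    k ≤ c T ∧ (avail (c T) C).card = c T - k := by
  have hrows := rowset_subset c hmono hC hT
  rw [mem_plc] at hC
  obtain ⟨hcard, hsub, hna⟩ := hC
  have h1 : (rowset C).card = k := by rw [rowset_card hna, hcard]
  set D := Finset.univ.filter fun b : Fin n => (b : ℕ) < c T with hD
  have h2 : rowset C ⊆ D := by
    intro b hb
    obtain ⟨r, hr, rfl⟩ := Finset.mem_image.mp hb
    simp [hD, hrows r hr]
  have h3 : D.card = c T := by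
    have hcT : c T ≤ n := hub T
    have : D = (Finset.range (c T)).attachFin (fun m hm => lt_of_lt_of_le
        (Finset.mem_range.mp hm) hcT) := by
      ext b
      simp [hD, Finset.mem_attachFin]
    rw [this, Finset.card_attachFin, Finset.card_range]
  have h4 : avail (c T) C = D \ rowset C := by
    ext b
    simp only [avail, Finset.mem_filter, Finset.mem_sdiff, hD, Finset.mem_univ, true_and]
  have h5 := Finset.card_le_card h2
  constructor
  · omega
  · rw [h4, Finset.card_sdiff_of_subset h2, h3, h1]

def colt (t : ℕ) : Finset (Fin n × Fin n) :=
  Finset.univ.filter fun s => (s.2 : ℕ) = t ∧ (s.1 : ℕ) < c s.2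

lemma trunc_succ_eq (t : ℕ) : trunc c (t + 1) = trunc c t ∪ colt c t := by
  ext s
  simp only [trunc, colt, Finset.mem_union, Finset.mem_filter, Finset.mem_univ, true_and]
  omega

lemma trunc_colt_disj (t : ℕ) : Disjoint (trunc c t) (colt c t) := by
  rw [Finset.disjoint_left]
  intro s hs hs'
  simp only [trunc, colt, Finset.mem_filter, Finset.mem_univ, true_and] at hs hs'
  omega

lemma tinv_succ_no_col {t k : ℕ} (ht : t < n) {C : Finset (Fin n × Fin n)}
    (hC : C ∈ plc c t k) :
    tinv c (t + 1) C = tinv c t C + (avail (c ⟨t, ht⟩) C).card := by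
  set T : Fin n := ⟨t, ht⟩ with hT
  have hTval : (T : ℕ) = t := rfl
  have hcols : ∀ r ∈ C, (r.2 : ℕ) < t := by
    intro r hr
    have := ((mem_plc c).mp hC).2.1 hr
    simp only [trunc, Finset.mem_filter, Finset.mem_univ, true_and] at this
    exact this.1
  rw [tinv, trunc_succ_eq, Finset.filter_union, Finset.card_union_of_disjoint
    ((trunc_colt_disj c t).mono (Finset.filter_subset _ _) (Finset.filter_subset _ _))]
  congr 1
  have him : ((colt c t).filter fun s => s ∉ C ∧ ∀ r ∈ C,
      ¬(r.2 = s.2 ∧ s.1 < r.1) ∧ ¬(r.1 = s.1 ∧ r.2 < s.2)) =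
      (avail (c T) C).image (fun b => (b, T)) := by
    ext s
    simp only [Finset.mem_filter, Finset.mem_image, colt, avail, Finset.mem_univ, true_and]
    constructor
    · rintro ⟨⟨hst, hsd⟩, hsC, hcond⟩
      have hsT : s.2 = T := Fin.ext (by rw [hTval, hst])
      refine ⟨s.1, ⟨by rw [← hsT]; exact hsd, ?_⟩, ?_⟩
      · intro hb
        obtain ⟨r, hr, hr1⟩ := Finset.mem_image.mp hb
        exact (hcond r hr).2 ⟨hr1, Fin.lt_def.mpr (by rw [hst]; exact hcols r hr)⟩
      · rw [← hsT]
    · rintro ⟨b, ⟨hbd, hbrow⟩, rfl⟩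
      refine ⟨⟨hTval, hbd⟩, ?_, ?_⟩
      · intro hmem
        exact absurd (hcols _ hmem) (by simp [hTval])
      · intro r hr
        constructor
        · rintro ⟨h1, -⟩
          have := hcols r hr
          rw [h1, hTval] at this
          omega
        · rintro ⟨h1, -⟩
          exact hbrow (Finset.mem_image.mpr ⟨r, hr, h1⟩)
  rw [him, Finset.card_image_of_injective _ (fun b b' h => by
    simpa using congrArg Prod.fst h)]

lemma tinv_succ_insert {t k : ℕ} (ht : t < n) {C' : Finset (Fin n × Fin n)}
    (hC : C' ∈ plc c t k) {a : Fin n} (ha : a ∈ avail (c ⟨t, ht⟩) C') :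
    tinv c (t + 1) (insert (a, (⟨t, ht⟩ : Fin n)) C') =
      tinv c t C' + ((avail (c ⟨t, ht⟩) C').filter fun b => a < b).card := by
  set T : Fin n := ⟨t, ht⟩ with hT
  have hTval : (T : ℕ) = t := rfl
  simp only [avail, Finset.mem_filter, Finset.mem_univ, true_and] at ha
  obtain ⟨had, harow⟩ := ha
  have hcols : ∀ r ∈ C', (r.2 : ℕ) < t := by
    intro r hr
    have := ((mem_plc c).mp hC).2.1 hr
    simp only [trunc, Finset.mem_filter, Finset.mem_univ, true_and] at this
    exact this.1
  set C : Finset (Fin n × Fin n) := insert (a, T) C' with hCdef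
  have haT : (a, T) ∈ C := Finset.mem_insert_self _ _
  rw [tinv, trunc_succ_eq, Finset.filter_union, Finset.card_union_of_disjoint
    ((trunc_colt_disj c t).mono (Finset.filter_subset _ _) (Finset.filter_subset _ _))]
  congr 1
  · -- trunc t part: predicate wrt C equals predicate wrt C'
    rw [tinv]
    apply congrArg
    apply Finset.filter_congr
    intro s hs
    simp only [trunc, Finset.mem_filter, Finset.mem_univ, true_and] at hs
    have hsT : s ≠ (a, T) := by
      intro h
      rw [h] at hs
      simp [hTval] at hs
    constructor
    · rintro ⟨hsC, hcond⟩
      exact ⟨fun h => hsC (Finset.mem_insert_of_mem h),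
        fun r hr => hcond r (Finset.mem_insert_of_mem hr)⟩
    · rintro ⟨hsC, hcond⟩
      refine ⟨?_, ?_⟩
      · intro h
        rcases Finset.mem_insert.mp h with h | h
        · exact hsT h
        · exact hsC h
      · intro r hr
        rcases Finset.mem_insert.mp hr with rfl | hr
        · constructor
          · rintro ⟨h1, -⟩
            rw [← h1] at hs
            simp [hTval] at hs
          · rintro ⟨-, h2⟩
            have := Fin.lt_def.mp h2
            rw [hTval] at this
            omega
        · exact hcond r hr
  · -- column t part
    have him : ((colt c t).filter fun s => s ∉ C ∧ ∀ r ∈ C,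
        ¬(r.2 = s.2 ∧ s.1 < r.1) ∧ ¬(r.1 = s.1 ∧ r.2 < s.2)) =
        ((avail (c T) C').filter fun b => a < b).image (fun b => (b, T)) := by
      ext s
      simp only [Finset.mem_filter, Finset.mem_image, colt, avail,
        Finset.mem_univ, true_and]
      constructor
      · rintro ⟨⟨hst, hsd⟩, hsC, hcond⟩
        have hsT : s.2 = T := Fin.ext (by rw [hTval, hst])
        have hsa : s.1 ≠ a := by
          intro h
          apply hsC
          rw [hCdef, Finset.mem_insert]
          left
          exact Prod.ext h hsT
        have hale : ¬ s.1 < a := by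
          intro h
          exact (hcond (a, T) haT).1 ⟨hsT.symm, h⟩
        refine ⟨s.1, ⟨⟨by rw [← hsT]; exact hsd, ?_⟩, lt_of_le_of_ne (not_lt.mp hale) (Ne.symm hsa)⟩, by rw [← hsT]⟩
        · intro hb
          obtain ⟨r, hr, hr1⟩ := Finset.mem_image.mp hb
          exact (hcond r (Finset.mem_insert_of_mem hr)).2
            ⟨hr1, Fin.lt_def.mpr (by rw [hst]; exact hcols r hr)⟩
      · rintro ⟨b, ⟨⟨hbd, hbrow⟩, hab⟩, rfl⟩
        refine ⟨⟨hTval, hbd⟩, ?_, ?_⟩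
        · intro hmem
          rcases Finset.mem_insert.mp hmem with h | h
          · exact absurd (congrArg Prod.fst h) (by simpa using ne_of_gt hab)
          · exact absurd (hcols _ h) (by simp [hTval])
        · intro r hr
          rcases Finset.mem_insert.mp hr with rfl | hr
          · exact ⟨fun h => absurd h.2 (not_lt.mpr (le_of_lt hab)), fun h => lt_irrefl _ h.2⟩
          · constructor
            · rintro ⟨h1, -⟩
              have := hcols r hr
              rw [h1, hTval] at this
              omega
            · rintro ⟨h1, -⟩
              exact hbrow (Finset.mem_image.mpr ⟨r, hr, h1⟩)
    rw [him, Finset.card_image_of_injective _ (fun b b' h => by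
      simpa using congrArg Prod.fst h)]

lemma filter_plc_no_col (t : ℕ) (ht : t < n) (m : ℕ) :
    (plc c (t + 1) m).filter (fun C => ∀ r ∈ C, (r.2 : ℕ) ≠ t) = plc c t m := by
  ext C
  simp only [Finset.mem_filter, mem_plc]
  constructor
  · rintro ⟨⟨hcard, hsub, hna⟩, hno⟩
    refine ⟨hcard, ?_, hna⟩
    intro r hr
    have := hsub hr
    simp only [trunc, Finset.mem_filter, Finset.mem_univ, true_and] at this ⊢
    exact ⟨by have := hno r hr; omega, this.2⟩
  · rintro ⟨hcard, hsub, hna⟩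
    refine ⟨⟨hcard, ?_, hna⟩, ?_⟩
    · intro r hr
      have := hsub hr
      simp only [trunc, Finset.mem_filter, Finset.mem_univ, true_and] at this ⊢
      exact ⟨by omega, this.2⟩
    · intro r hr
      have := hsub hr
      simp only [trunc, Finset.mem_filter, Finset.mem_univ, true_and] at this
      omega

lemma na_mono {C D : Finset (Fin n × Fin n)} (h : NonAttacking C) (hsub : D ⊆ C) :
    NonAttacking D := fun r hr r' hr' hne => h r (hsub hr) r' (hsub hr') hne

lemma partB_decomp (hub : ∀ j, c j ≤ n) {t : ℕ} (ht : t < n) (k : ℕ) :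
    (plc c (t + 1) (k + 1)).filter (fun C => ¬ ∀ r ∈ C, (r.2 : ℕ) ≠ t) =
      (plc c t k).biUnion fun C' =>
        (avail (c ⟨t, ht⟩) C').image fun a => insert (a, (⟨t, ht⟩ : Fin n)) C' := by
  set T : Fin n := ⟨t, ht⟩ with hT
  have hTval : (T : ℕ) = t := rfl
  ext C
  simp only [Finset.mem_filter, Finset.mem_biUnion, Finset.mem_image]
  constructor
  · rintro ⟨hC, hex⟩
    push_neg at hex
    obtain ⟨r₀, hr₀, hr₀t⟩ := hex
    have hna := ((mem_plc c).mp hC).2.2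
    have hsub := ((mem_plc c).mp hC).2.1
    have hcard := ((mem_plc c).mp hC).1
    have hr₀T : r₀.2 = T := Fin.ext (by rw [hTval, hr₀t])
    set C' := C.erase r₀ with hC'
    have hr₀eq : r₀ = (r₀.1, T) := Prod.ext rfl hr₀T
    have hcols' : ∀ r ∈ C', (r.2 : ℕ) < t := by
      intro r hr
      have hrC := Finset.mem_of_mem_erase hr
      have hrne := Finset.ne_of_mem_erase hr
      have h2 := (hna r hrC r₀ hr₀ hrne).2
      have := hsub hrC
      simp only [trunc, Finset.mem_filter, Finset.mem_univ, true_and] at this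
      have : (r.2 : ℕ) < t + 1 := this.1
      rcases Nat.lt_succ_iff_lt_or_eq.mp this with h | h
      · exact h
      · exact absurd (Fin.ext (by rw [h, ← hTval]) : r.2 = T) (by rw [← hr₀T] at *; exact fun hh => h2 (hh.trans hr₀T ▸ hh) )
    refine ⟨C', ?_, r₀.1, ?_, ?_⟩
    · rw [mem_plc]
      refine ⟨by rw [hC', Finset.card_erase_of_mem hr₀, hcard]; omega, ?_, na_mono hna (Finset.erase_subset _ _)⟩
      intro r hr
      have := hsub (Finset.mem_of_mem_erase hr)
      simp only [trunc, Finset.mem_filter, Finset.mem_univ, true_and] at this ⊢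
      exact ⟨hcols' r hr, this.2⟩
    · simp only [avail, Finset.mem_filter, Finset.mem_univ, true_and]
      constructor
      · have := hsub hr₀
        simp only [trunc, Finset.mem_filter, Finset.mem_univ, true_and] at this
        have h2 := this.2
        rw [hr₀T] at h2
        exact h2
      · intro hmem
        obtain ⟨r, hr, hr1⟩ := Finset.mem_image.mp hmem
        have hrC := Finset.mem_of_mem_erase hr
        have hrne := Finset.ne_of_mem_erase hr
        exact (hna r hrC r₀ hr₀ hrne).1 hr1
    · rw [hC', ← hr₀eq, Finset.insert_erase hr₀]
  · rintro ⟨C', hC', a, ha, rfl⟩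
    have hna' := ((mem_plc c).mp hC').2.2
    have hsub' := ((mem_plc c).mp hC').2.1
    have hcard' := ((mem_plc c).mp hC').1
    simp only [avail, Finset.mem_filter, Finset.mem_univ, true_and] at ha
    obtain ⟨had, harow⟩ := ha
    have hcols' : ∀ r ∈ C', (r.2 : ℕ) < t := by
      intro r hr
      have := hsub' hr
      simp only [trunc, Finset.mem_filter, Finset.mem_univ, true_and] at this
      exact this.1
    have hnotmem : (a, T) ∉ C' := by
      intro h
      have := hcols' _ h
      simp [hTval] at this
    constructor
    · rw [mem_plc]
      refine ⟨by rw [Finset.card_insert_of_notMem hnotmem, hcard'], ?_, ?_⟩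
      · intro r hr
        rcases Finset.mem_insert.mp hr with rfl | hr
        · simp only [trunc, Finset.mem_filter, Finset.mem_univ, true_and]
          exact ⟨by simp [hTval], had⟩
        · have := hsub' hr
          simp only [trunc, Finset.mem_filter, Finset.mem_univ, true_and] at this ⊢
          exact ⟨by omega, this.2⟩
      · intro r hr r' hr' hne
        rcases Finset.mem_insert.mp hr with rfl | hr <;>
          rcases Finset.mem_insert.mp hr' with h' | hr'
        · exact absurd h'.symm hne
        · constructor
          · intro h
            exact harow (Finset.mem_image.mpr ⟨r', hr', h.symm⟩)
          · intro h
            have := hcols' r' hr'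
            rw [← h, hTval] at this
            omega
        · rcases h' with rfl
          constructor
          · intro h
            exact harow (Finset.mem_image.mpr ⟨r, hr, h⟩)
          · intro h
            have := hcols' r hr
            rw [h, hTval] at this
            omega
        · exact hna' r hr r' hr' hne
    · intro hall
      exact hall (a, T) (Finset.mem_insert_self _ _) hTval

lemma qbrk_sub {k d : ℕ} (h : k ≤ d) :
    qbrkPos q ((d : ℤ) - k) = ∑ i ∈ Finset.range (d - k), q ^ i := by
  rw [show ((d : ℤ) - k) = ((d - k : ℕ) : ℤ) by omega, qbrk_natCast]
  rfl

lemma partA (hmono : Monotone c) (hub : ∀ j, c j ≤ n) {t : ℕ} (ht : t < n) (m : ℕ) :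
    ∑ C ∈ plc c t m, q ^ tinv c (t + 1) C = q ^ (c ⟨t, ht⟩ - m) * tR q c t m := by
  rw [tR, Finset.mul_sum]
  apply Finset.sum_congr rfl
  intro C hC
  rw [tinv_succ_no_col c ht hC,
    (avail_card c hmono hub (rfl : ((⟨t, ht⟩ : Fin n) : ℕ) = t) hC).2, pow_add, mul_comm]

lemma partB (hmono : Monotone c) (hub : ∀ j, c j ≤ n) {t : ℕ} (ht : t < n) (k : ℕ) :
    ∑ C ∈ (plc c (t + 1) (k + 1)).filter (fun C => ¬ ∀ r ∈ C, (r.2 : ℕ) ≠ t),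
        q ^ tinv c (t + 1) C =
      qbrkPos q ((c ⟨t, ht⟩ : ℤ) - k) * tR q c t k := by
  set T : Fin n := ⟨t, ht⟩ with hT
  rw [partB_decomp c hub ht k]
  rw [Finset.sum_biUnion ?hdisj]
  case hdisj =>
    intro C₁ h₁ C₂ h₂ hne
    simp only [Function.onFun]
    rw [Finset.disjoint_left]
    intro C hC1 hC2
    apply hne
    obtain ⟨a₁, ha₁, rfl⟩ := Finset.mem_image.mp hC1
    obtain ⟨a₂, ha₂, heq⟩ := Finset.mem_image.mp hC2
    have key : ∀ (C' : Finset (Fin n × Fin n)), C' ∈ plc c t k → ∀ a : Fin n,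
        (insert (a, T) C').filter (fun r => (r.2 : ℕ) ≠ t) = C' := by
      intro C' hC' a
      ext r
      simp only [Finset.mem_filter, Finset.mem_insert]
      constructor
      · rintro ⟨rfl | hr, hrt⟩
        · exact absurd rfl hrt
        · exact hr
      · intro hr
        have := ((mem_plc c).mp hC').2.1 hr
        simp only [trunc, Finset.mem_filter, Finset.mem_univ, true_and] at this
        exact ⟨Or.inr hr, by omega⟩
    calc C₁ = (insert (a₁, T) C₁).filter (fun r => (r.2 : ℕ) ≠ t) := (key C₁ h₁ a₁).symm
      _ = (insert (a₂, T) C₂).filter (fun r => (r.2 : ℕ) ≠ t) := by rw [heq]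
      _ = C₂ := key C₂ h₂ a₂
  rw [tR, Finset.mul_sum]
  apply Finset.sum_congr rfl
  intro C' hC'
  have hinj : ∀ a ∈ avail (c T) C', ∀ a' ∈ avail (c T) C',
      insert (a, T) C' = insert (a', T) C' → a = a' := by
    intro a ha a' ha' heq
    have : (a, T) ∈ insert (a', T) C' := by
      rw [← heq]; exact Finset.mem_insert_self _ _
    rcases Finset.mem_insert.mp this with h | h
    · exact congrArg Prod.fst h
    · have := ((mem_plc c).mp hC').2.1 h
      simp only [trunc, Finset.mem_filter, Finset.mem_univ, true_and] at this
      have : ((⟨t, ht⟩ : Fin n) : ℕ) = t := rfl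
      omega
  rw [Finset.sum_image hinj]
  have hc := avail_card c hmono hub (rfl : ((⟨t, ht⟩ : Fin n) : ℕ) = t) hC'
  calc ∑ a ∈ avail (c T) C', q ^ tinv c (t + 1) (insert (a, T) C')
      = ∑ a ∈ avail (c T) C',
          q ^ tinv c t C' * q ^ ((avail (c T) C').filter fun b => a < b).card := by
        apply Finset.sum_congr rfl
        intro a ha
        rw [tinv_succ_insert c ht hC' ha, pow_add]
    _ = q ^ tinv c t C' * ∑ i ∈ Finset.range ((avail (c T) C').card), q ^ i := by
        rw [← Finset.mul_sum, sum_pow_filter_lt]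
    _ = qbrkPos q ((c T : ℤ) - k) * q ^ tinv c t C' := by
        rw [hc.2, ← qbrk_sub q hc.1, mul_comm]

lemma tR_succ_zero (hmono : Monotone c) (hub : ∀ j, c j ≤ n) {t : ℕ} (ht : t < n) :
    tR q c (t + 1) 0 = q ^ (c ⟨t, ht⟩) * tR q c t 0 := by
  rw [tR, ← Finset.sum_filter_add_sum_filter_not (plc c (t + 1) 0)
    (fun C => ∀ r ∈ C, (r.2 : ℕ) ≠ t), filter_plc_no_col c t ht 0]
  have h0 : (plc c (t + 1) 0).filter (fun C => ¬ ∀ r ∈ C, (r.2 : ℕ) ≠ t) = ∅ := by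
    rw [Finset.eq_empty_iff_forall_notMem]
    intro C hC
    simp only [Finset.mem_filter, mem_plc] at hC
    have : C = ∅ := Finset.card_eq_zero.mp hC.1.1
    subst this
    exact hC.2 (by intro r hr; exact absurd hr (Finset.notMem_empty r))
  rw [h0, Finset.sum_empty, add_zero, partA q c hmono hub ht 0, Nat.sub_zero]

lemma tR_succ (hmono : Monotone c) (hub : ∀ j, c j ≤ n) {t : ℕ} (ht : t < n) (k : ℕ) :
    tR q c (t + 1) (k + 1) = q ^ (c ⟨t, ht⟩ - (k + 1)) * tR q c t (k + 1)
      + qbrkPos q ((c ⟨t, ht⟩ : ℤ) - k) * tR q c t k := by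
  rw [tR, ← Finset.sum_filter_add_sum_filter_not (plc c (t + 1) (k + 1))
    (fun C => ∀ r ∈ C, (r.2 : ℕ) ≠ t), filter_plc_no_col c t ht (k + 1),
    partA q c hmono hub ht (k + 1), partB q c hmono hub ht k]

lemma scalar {k j m d t : ℕ} (hjm : j + m = t) (hmd : m ≤ d) :
    qbrkPos q ((k : ℤ) + d - t) * qfall q k j
      = q ^ (d - m) * qfall q k (j + 1) + qbrkPos q ((d : ℤ) - m) * qfall q k j := by
  by_cases hkj : k < j
  · simp [qfall_of_lt q hkj, qfall_of_lt q (show k < j + 1 by omega)]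
  · push_neg at hkj
    have h1 : (k : ℤ) + d - t = ((d - m + (k - j) : ℕ) : ℤ) := by omega
    have h2 : ((d : ℤ) - m) = ((d - m : ℕ) : ℤ) := by omega
    rw [h1, h2, qbrk_natCast, qbrk_natCast, qfall_succ, qint_add]
    ring

lemma GRmain (hmono : Monotone c) (hub : ∀ j, c j ≤ n) :
    ∀ t, t ≤ n → ∀ k : ℕ,
      ∏ i ∈ Finset.univ.filter (fun i : Fin n => (i : ℕ) < t),
          qbrkPos q ((k : ℤ) + c i - i) =
        ∑ j ∈ Finset.range (t + 1), tR q c t (t - j) * qfall q k j := by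
  intro t
  induction t with
  | zero =>
    intro _ k
    have h1 : Finset.univ.filter (fun i : Fin n => (i : ℕ) < 0) = ∅ := by
      rw [Finset.eq_empty_iff_forall_notMem]; intro i; simp
    have h2 : trunc c 0 = ∅ := by
      rw [Finset.eq_empty_iff_forall_notMem]; intro s; simp [trunc]
    have h3 : plc c 0 0 = {∅} := by
      ext C
      simp only [mem_plc, Finset.mem_singleton, Finset.card_eq_zero, h2,
        Finset.subset_empty]
      constructor
      · rintro ⟨rfl, -⟩; rfl
      · rintro rfl
        exact ⟨rfl, rfl, fun r hr => absurd hr (Finset.notMem_empty r)⟩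
    have h4 : tinv c 0 (∅ : Finset (Fin n × Fin n)) = 0 := by
      simp [tinv, h2]
    rw [h1, Finset.prod_empty]
    rw [Finset.range_one, Finset.sum_singleton]
    rw [Nat.sub_zero, tR, h3, Finset.sum_singleton, h4]
    simp [qfall]
  | succ t ih =>
    intro hst k
    have ht : t < n := hst
    set T : Fin n := ⟨t, ht⟩ with hTdef
    set d := c T with hd
    have hfil : Finset.univ.filter (fun i : Fin n => (i : ℕ) < t + 1)
        = insert T (Finset.univ.filter (fun i : Fin n => (i : ℕ) < t)) := by
      ext i
      simp only [Finset.mem_filter, Finset.mem_insert, Finset.mem_univ, true_and]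
      constructor
      · intro h
        rcases Nat.lt_succ_iff_lt_or_eq.mp h with h | h
        · exact Or.inr h
        · exact Or.inl (Fin.ext h)
      · rintro (rfl | h) <;> simp_all <;> omega
    rw [hfil, Finset.prod_insert (by simp [hTdef])]
    rw [ih (le_of_lt ht) k]
    have hTv : ((T : Fin n) : ℕ) = t := rfl
    -- transform RHS
    have hzero : tR q c t (t + 1) = 0 := by
      rw [tR, plc_empty_col c (Nat.lt_succ_self t), Finset.sum_empty]
    have hrhs : ∑ j ∈ Finset.range (t + 1 + 1), tR q c (t + 1) (t + 1 - j) * qfall q k j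
        = ∑ j ∈ Finset.range (t + 1), tR q c t (t - j) *
            (q ^ (d - (t - j)) * qfall q k (j + 1)
              + qbrkPos q ((d : ℤ) - ((t - j : ℕ) : ℤ)) * qfall q k j) := by
      rw [Finset.sum_range_succ]
      have hlast : tR q c (t + 1) (t + 1 - (t + 1)) * qfall q k (t + 1)
          = q ^ d * tR q c t 0 * qfall q k (t + 1) := by
        rw [Nat.sub_self, tR_succ_zero q c hmono hub ht]
      rw [hlast]
      have hstep : ∀ j ∈ Finset.range (t + 1), tR q c (t + 1) (t + 1 - j) * qfall q k j
          = q ^ (d - (t - j + 1)) * tR q c t (t - j + 1) * qfall q k j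
            + qbrkPos q ((d : ℤ) - ((t - j : ℕ) : ℤ)) * tR q c t (t - j) * qfall q k j := by
        intro j hj
        have hj' : j ≤ t := by simpa [Nat.lt_succ_iff] using hj
        rw [show t + 1 - j = (t - j) + 1 by omega, tR_succ q c hmono hub ht (t - j)]
        ring
      rw [Finset.sum_congr rfl hstep, Finset.sum_add_distrib]
      have hA : ∑ j ∈ Finset.range (t + 1),
          q ^ (d - (t - j + 1)) * tR q c t (t - j + 1) * qfall q k j
          = ∑ j ∈ Finset.range t,
              tR q c t (t - j) * (q ^ (d - (t - j)) * qfall q k (j + 1)) := by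
        rw [Finset.sum_range_succ']
        have h0 : q ^ (d - (t - 0 + 1)) * tR q c t (t - 0 + 1) * qfall q k 0 = 0 := by
          rw [Nat.sub_zero, hzero]
          ring
        rw [h0, add_zero]
        apply Finset.sum_congr rfl
        intro j hj
        have hj' : j < t := Finset.mem_range.mp hj
        rw [show t - (j + 1) + 1 = t - j by omega]
        ring
      rw [hA]
      have hB : ∑ j ∈ Finset.range (t + 1), tR q c t (t - j) *
            (q ^ (d - (t - j)) * qfall q k (j + 1)
              + qbrkPos q ((d : ℤ) - ((t - j : ℕ) : ℤ)) * qfall q k j)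
          = (∑ j ∈ Finset.range t, tR q c t (t - j) * (q ^ (d - (t - j)) * qfall q k (j + 1))
              + q ^ d * tR q c t 0 * qfall q k (t + 1))
            + ∑ j ∈ Finset.range (t + 1),
                qbrkPos q ((d : ℤ) - ((t - j : ℕ) : ℤ)) * tR q c t (t - j) * qfall q k j := by
        rw [show ∀ S1 S2 : ℚ, (∑ j ∈ Finset.range (t + 1), tR q c t (t - j) *
            (q ^ (d - (t - j)) * qfall q k (j + 1)
              + qbrkPos q ((d : ℤ) - ((t - j : ℕ) : ℤ)) * qfall q k j)) =
            (∑ j ∈ Finset.range (t + 1), tR q c t (t - j) * (q ^ (d - (t - j)) * qfall q k (j + 1)))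
            + ∑ j ∈ Finset.range (t + 1), qbrkPos q ((d : ℤ) - ((t - j : ℕ) : ℤ)) * tR q c t (t - j) * qfall q k j
          from fun _ _ => by
            rw [← Finset.sum_add_distrib]
            apply Finset.sum_congr rfl
            intro j hj
            ring]
        · congr 1
          rw [Finset.sum_range_succ, Nat.sub_self, Nat.sub_zero]
          ring
        · exact 0
        · exact 0
      rw [hB]
      ring
    rw [hrhs, Finset.mul_sum]
    apply Finset.sum_congr rfl
    intro j hj
    have hj' : j ≤ t := by simpa [Nat.lt_succ_iff] using hj
    by_cases hdm : d < t - j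
    · have : tR q c t (t - j) = 0 := by
        rw [tR, plc_empty_row c hmono hTv hdm, Finset.sum_empty]
      rw [this]
      ring
    · push_neg at hdm
      have := scalar q (k := k) (show j + (t - j) = t by omega) hdm
      calc qbrkPos q ((k : ℤ) + c T - (T : ℕ)) * (tR q c t (t - j) * qfall q k j)
          = tR q c t (t - j) * (qbrkPos q ((k : ℤ) + d - t) * qfall q k j) := by
            rw [hTv]; ring
        _ = tR q c t (t - j) *
            (q ^ (d - (t - j)) * qfall q k (j + 1)
              + qbrkPos q ((d : ℤ) - ((t - j : ℕ) : ℤ)) * qfall q k j) := by rw [this]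

/- ---------------- power series ---------------- -/

lemma mk_mul_one_sub (a : ℕ → ℚ) (r : ℚ) :
    (PowerSeries.mk a) * (1 - PowerSeries.C r * PowerSeries.X) =
      PowerSeries.mk fun k => a k - r * (if k = 0 then 0 else a (k - 1)) := by
  ext m
  have : (PowerSeries.mk a) * (1 - PowerSeries.C r * PowerSeries.X)
      = PowerSeries.mk a - PowerSeries.C r * (PowerSeries.mk a * PowerSeries.X) := by
    ring
  rw [this, map_sub, PowerSeries.coeff_C_mul, PowerSeries.coeff_mk]
  cases m with
  | zero => simp [PowerSeries.coeff_zero_mul_X]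
  | succ m => simp [PowerSeries.coeff_succ_mul_X]

lemma C_X_mul_mk (a : ℕ → ℚ) (r : ℚ) :
    PowerSeries.C r * PowerSeries.X * PowerSeries.mk a =
      PowerSeries.mk fun k => if k = 0 then 0 else r * a (k - 1) := by
  ext m
  have : PowerSeries.C r * PowerSeries.X * PowerSeries.mk a
      = PowerSeries.C r * (PowerSeries.mk a * PowerSeries.X) := by ring
  rw [this, PowerSeries.coeff_C_mul, PowerSeries.coeff_mk]
  cases m with
  | zero => simp [PowerSeries.coeff_zero_mul_X]
  | succ m => simp [PowerSeries.coeff_succ_mul_X]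

lemma mkF (j : ℕ) :
    (PowerSeries.mk fun k => qfall q k j) *
        ∏ i ∈ Finset.range (j + 1), (1 - PowerSeries.C (q ^ i) * PowerSeries.X) =
      PowerSeries.C (qfact q j) * PowerSeries.X ^ j := by
  induction j with
  | zero =>
    rw [Finset.range_one, Finset.prod_singleton, pow_zero, pow_zero, mul_one]
    have h1 : (PowerSeries.mk fun k => qfall q k 0) = PowerSeries.mk fun _ => (1 : ℚ) := by
      ext m
      simp [qfall]
    rw [h1, mk_mul_one_sub]
    have : qfact q 0 = 1 := by simp [qfact]
    rw [this, map_one]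
    ext m
    rw [PowerSeries.coeff_mk]
    cases m with
    | zero => simp [PowerSeries.coeff_one]
    | succ m => simp [PowerSeries.coeff_one]
  | succ j ih =>
    have hsplit : ∏ i ∈ Finset.range (j + 1 + 1),
        (1 - PowerSeries.C (q ^ i) * PowerSeries.X)
        = (1 - PowerSeries.C (q ^ (j + 1)) * PowerSeries.X) *
          ∏ i ∈ Finset.range (j + 1), (1 - PowerSeries.C (q ^ i) * PowerSeries.X) := by
      rw [Finset.prod_range_succ, mul_comm]
    have hkey : (PowerSeries.mk fun k => qfall q k (j + 1)) *
        (1 - PowerSeries.C (q ^ (j + 1)) * PowerSeries.X)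
        = PowerSeries.C (qint q (j + 1)) * PowerSeries.X *
          PowerSeries.mk fun k => qfall q k j := by
      rw [mk_mul_one_sub, C_X_mul_mk]
      ext m
      rw [PowerSeries.coeff_mk, PowerSeries.coeff_mk]
      cases m with
      | zero => simp [qfall_of_lt q (Nat.succ_pos j)]
      | succ m =>
        simp only [Nat.succ_ne_zero, if_false, Nat.add_sub_cancel]
        by_cases hkj : m < j
        · rw [qfall_of_lt q (show m + 1 < j + 1 by omega), qfall_of_lt q hkj,
            qfall_of_lt q (show m < j + 1 by omega)]
          ring
        · push_neg at hkj
          rw [qfall_succ_fst, qfall_succ,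
            show qint q (m + 1) = qint q (j + 1) + q ^ (j + 1) * qint q (m - j) by
              rw [← qint_add q (j + 1) (m - j), show j + 1 + (m - j) = m + 1 by omega]]
          ring
    calc (PowerSeries.mk fun k => qfall q k (j + 1)) *
        ∏ i ∈ Finset.range (j + 1 + 1), (1 - PowerSeries.C (q ^ i) * PowerSeries.X)
        = ((PowerSeries.mk fun k => qfall q k (j + 1)) *
            (1 - PowerSeries.C (q ^ (j + 1)) * PowerSeries.X)) *
          ∏ i ∈ Finset.range (j + 1), (1 - PowerSeries.C (q ^ i) * PowerSeries.X) := by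
          rw [hsplit]; ring
      _ = PowerSeries.C (qint q (j + 1)) * PowerSeries.X *
          ((PowerSeries.mk fun k => qfall q k j) *
            ∏ i ∈ Finset.range (j + 1), (1 - PowerSeries.C (q ^ i) * PowerSeries.X)) := by
          rw [hkey]; ring
      _ = PowerSeries.C (qfact q (j + 1)) * PowerSeries.X ^ (j + 1) := by
          rw [ih, show qfact q (j + 1) = qfact q j * qint q (j + 1) from
            Finset.prod_range_succ _ _, map_mul]
          ring

/- ---------------- reflection ---------------- -/

lemma natDegree_prod_lin (s : Finset ℕ) (a : ℕ → ℚ) :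
    (∏ i ∈ s, (Polynomial.X - Polynomial.C (a i))).natDegree ≤ s.card := by
  refine le_trans (Polynomial.natDegree_prod_le s fun i => Polynomial.X - Polynomial.C (a i))
    (le_of_eq ?_)
  simp [Polynomial.natDegree_X_sub_C]

lemma reflect_prod_lin (s : Finset ℕ) (a : ℕ → ℚ) :
    (∏ i ∈ s, (Polynomial.X - Polynomial.C (a i))).reflect s.card =
      ∏ i ∈ s, (1 - Polynomial.C (a i) * Polynomial.X) := by
  induction s using Finset.induction with
  | empty => simp [Polynomial.reflect_one]
  | @insert x s' hx ih =>
    rw [Finset.prod_insert hx, Finset.prod_insert hx, Finset.card_insert_of_notMem hx,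
      show s'.card + 1 = 1 + s'.card by omega,
      Polynomial.reflect_mul _ _ (le_of_eq (Polynomial.natDegree_X_sub_C _))
        (natDegree_prod_lin s' a), ih]
    congr 1
    rw [Polynomial.reflect_sub, Polynomial.reflect_C]
    simp [pow_one]

lemma sum_coeff_reflect (n : ℕ) (P : Polynomial ℚ) (h : P.natDegree ≤ n) :
    ∑ k ∈ Finset.range (n + 1), Polynomial.C (P.coeff (n - k)) * Polynomial.X ^ k =
      P.reflect n := by
  ext m
  rw [Polynomial.coeff_reflect]
  rw [Polynomial.finset_sum_coeff]
  by_cases hm : m ≤ n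
  · rw [Polynomial.revAt_le hm]
    rw [Finset.sum_eq_single m]
    · simp [Polynomial.coeff_C_mul, Polynomial.coeff_X_pow]
    · intro b _ hb
      simp [Polynomial.coeff_C_mul, Polynomial.coeff_X_pow, (Ne.symm hb)]
    · intro hmem
      simp only [Finset.mem_range, Nat.lt_succ_iff] at hmem
      omega
  · push_neg at hm
    have h1 : Polynomial.revAt n m = m := Polynomial.revAt_eq_self_of_lt hm
    rw [h1, Polynomial.coeff_eq_zero_of_natDegree_lt (lt_of_le_of_lt h hm)]
    apply Finset.sum_eq_zero
    intro b hb
    simp only [Finset.mem_range, Nat.lt_succ_iff] at hb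
    rw [Polynomial.coeff_C_mul, Polynomial.coeff_X_pow, if_neg (by omega)]
    ring

lemma natDegree_hitGen (c : Fin n → ℕ) : (hitGen q n c).natDegree ≤ n := by
  refine le_trans (Polynomial.natDegree_sum_le _ _) ?_
  rw [Finset.fold_max_le]
  refine ⟨Nat.zero_le n, ?_⟩
  intro j hj
  refine le_trans (Polynomial.natDegree_mul_le) ?_
  rw [Polynomial.natDegree_C]
  have h2 : (∏ i ∈ Finset.Icc (j + 1) n,
      (Polynomial.X - Polynomial.C (q ^ i))).natDegree ≤ (Finset.Icc (j + 1) n).card :=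
    natDegree_prod_lin _ _
  have h3 : (Finset.Icc (j + 1) n).card ≤ n := by
    rw [Nat.card_Icc]
    omega
  omega

lemma reflect_hitGen (c : Fin n → ℕ) :
    (hitGen q n c).reflect n =
      ∑ j ∈ Finset.range (n + 1),
        Polynomial.C (qfact q j * qRook q n c (n - j)) *
          (Polynomial.X ^ j *
            ∏ i ∈ Finset.Icc (j + 1) n, (1 - Polynomial.C (q ^ i) * Polynomial.X)) := by
  rw [hitGen, show ∀ (f : ℕ → Polynomial ℚ), (∑ j ∈ Finset.range (n + 1), f j).reflect n
      = ∑ j ∈ Finset.range (n + 1), (f j).reflect n from fun f => by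
    induction (n + 1) with
    | zero => simp [Polynomial.reflect_zero]
    | succ m ihm => rw [Finset.sum_range_succ, Finset.sum_range_succ,
        Polynomial.reflect_add, ihm]]
  apply Finset.sum_congr rfl
  intro j hj
  have hjn : j ≤ n := by simpa [Nat.lt_succ_iff] using hj
  rw [Polynomial.reflect_C_mul]
  congr 1
  have hcard : (Finset.Icc (j + 1) n).card = n - j := by
    rw [Nat.card_Icc]
    omega
  have hsplit : (∏ i ∈ Finset.Icc (j + 1) n, (Polynomial.X - Polynomial.C (q ^ i)))
      = (∏ i ∈ Finset.Icc (j + 1) n, (Polynomial.X - Polynomial.C (q ^ i))) * 1 := by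
    rw [mul_one]
  clear hsplit
  have hn' : n - j + j = n := by omega
  calc (∏ i ∈ Finset.Icc (j + 1) n, (Polynomial.X - Polynomial.C (q ^ i))).reflect n
      = ((∏ i ∈ Finset.Icc (j + 1) n, (Polynomial.X - Polynomial.C (q ^ i))) *
          1).reflect (n - j + j) := by rw [mul_one, hn']
    _ = (∏ i ∈ Finset.Icc (j + 1) n,
          (Polynomial.X - Polynomial.C (q ^ i))).reflect (n - j) *
        (1 : Polynomial ℚ).reflect j :=
        Polynomial.reflect_mul _ _ (by rw [← hcard]; exact natDegree_prod_lin _ _)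
          (by simp)
    _ = (∏ i ∈ Finset.Icc (j + 1) n, (1 - Polynomial.C (q ^ i) * Polynomial.X)) *
        Polynomial.X ^ j := by rw [Polynomial.reflect_one, ← hcard, reflect_prod_lin]
    _ = Polynomial.X ^ j *
        ∏ i ∈ Finset.Icc (j + 1) n, (1 - Polynomial.C (q ^ i) * Polynomial.X) := by ring

end GR18
end
theorem statement18 (q : ℚ) (n : ℕ) (c : Fin n → ℕ) (hc : IsFerrers n c) :
    (∑ k ∈ Finset.range (n + 1),
        PowerSeries.C (qHit q n c (n - k)) * (PowerSeries.X : PowerSeries ℚ) ^ k) *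
        (∏ i ∈ Finset.range (n + 1),
          (1 - PowerSeries.C (q ^ i) * (PowerSeries.X : PowerSeries ℚ)))⁻¹ =
      PowerSeries.mk fun k => ∏ i : Fin n, qbrkPos q ((k : ℤ) + c i - i) := by
  obtain ⟨hmono, hub⟩ := hc
  set P : PowerSeries ℚ := ∏ i ∈ Finset.range (n + 1),
    (1 - PowerSeries.C (q ^ i) * PowerSeries.X) with hP
  have hGR : ∀ k : ℕ, (∏ i : Fin n, qbrkPos q ((k : ℤ) + c i - i))
      = ∑ j ∈ Finset.range (n + 1), qRook q n c (n - j) * GR18.qfall q k j := by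
    intro k
    have h := GR18.GRmain q c hmono hub n le_rfl k
    have hfil : Finset.univ.filter (fun i : Fin n => (i : ℕ) < n) = Finset.univ := by
      apply Finset.filter_true_of_mem
      intro i _
      exact i.isLt
    rw [hfil] at h
    rw [h]
    apply Finset.sum_congr rfl
    intro j _
    rw [GR18.tR_n_eq]
  have hGR' : ∀ k : ℕ, (∏ i : Fin n, qbrkPos q ((k : ℤ) + c i - i))
      = ∑ j ∈ Finset.range (n + 1), qRook q n c (n - j) * GR18.qfall q k j := hGR
  have hmkf : (PowerSeries.mk fun k => ∏ i : Fin n, qbrkPos q ((k : ℤ) + c i - i))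
      = ∑ j ∈ Finset.range (n + 1), PowerSeries.C (qRook q n c (n - j)) *
          PowerSeries.mk (fun k => GR18.qfall q k j) := by
    ext m
    rw [PowerSeries.coeff_mk, hGR' m, map_sum]
    apply Finset.sum_congr rfl
    intro j _
    rw [PowerSeries.coeff_C_mul, PowerSeries.coeff_mk]
  have hterm : ∀ j ∈ Finset.range (n + 1), PowerSeries.C (qRook q n c (n - j)) *
      PowerSeries.mk (fun k => GR18.qfall q k j) * P
      = PowerSeries.C (qfact q j * qRook q n c (n - j)) *
        (PowerSeries.X ^ j *
          ∏ i ∈ Finset.Icc (j + 1) n, (1 - PowerSeries.C (q ^ i) * PowerSeries.X)) := by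
    intro j hj
    have hjn : j ≤ n := by
      have := Finset.mem_range.mp hj
      omega
    have hPsplit : P = (∏ i ∈ Finset.range (j + 1),
        (1 - PowerSeries.C (q ^ i) * PowerSeries.X)) *
        ∏ i ∈ Finset.Icc (j + 1) n, (1 - PowerSeries.C (q ^ i) * PowerSeries.X) := by
      rw [hP, Finset.range_eq_Ico,
        show Finset.Icc (j + 1) n = Finset.Ico (j + 1) (n + 1) from (Finset.Ico_add_one_right_eq_Icc _ _).symm]
      rw [Finset.range_eq_Ico]
      exact (Finset.prod_Ico_consecutive (fun i => (1 - PowerSeries.C (q ^ i) * (PowerSeries.X : PowerSeries ℚ))) (Nat.zero_le (j + 1)) (show j + 1 ≤ n + 1 by omega)).symm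
    calc PowerSeries.C (qRook q n c (n - j)) *
        PowerSeries.mk (fun k => GR18.qfall q k j) * P
        = PowerSeries.C (qRook q n c (n - j)) *
          ((PowerSeries.mk fun k => GR18.qfall q k j) *
            ∏ i ∈ Finset.range (j + 1), (1 - PowerSeries.C (q ^ i) * PowerSeries.X)) *
          ∏ i ∈ Finset.Icc (j + 1) n, (1 - PowerSeries.C (q ^ i) * PowerSeries.X) := by
          rw [hPsplit]
          ring
      _ = PowerSeries.C (qRook q n c (n - j)) *
          (PowerSeries.C (qfact q j) * PowerSeries.X ^ j) *
          ∏ i ∈ Finset.Icc (j + 1) n, (1 - PowerSeries.C (q ^ i) * PowerSeries.X) := by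
          rw [GR18.mkF q j]
      _ = PowerSeries.C (qfact q j * qRook q n c (n - j)) *
          (PowerSeries.X ^ j *
            ∏ i ∈ Finset.Icc (j + 1) n, (1 - PowerSeries.C (q ^ i) * PowerSeries.X)) := by
          rw [map_mul]
          ring
  have hpoly : (∑ k ∈ Finset.range (n + 1),
      Polynomial.C (qHit q n c (n - k)) * Polynomial.X ^ k : Polynomial ℚ)
      = ∑ j ∈ Finset.range (n + 1),
          Polynomial.C (qfact q j * qRook q n c (n - j)) *
            (Polynomial.X ^ j *
              ∏ i ∈ Finset.Icc (j + 1) n, (1 - Polynomial.C (q ^ i) * Polynomial.X)) := by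
    simp only [qHit]
    rw [GR18.sum_coeff_reflect n (hitGen q n c) (GR18.natDegree_hitGen q c),
      GR18.reflect_hitGen q c]
  have hps : (∑ k ∈ Finset.range (n + 1),
      PowerSeries.C (qHit q n c (n - k)) * (PowerSeries.X : PowerSeries ℚ) ^ k)
      = ∑ j ∈ Finset.range (n + 1),
          PowerSeries.C (qfact q j * qRook q n c (n - j)) *
            ((PowerSeries.X : PowerSeries ℚ) ^ j *
              ∏ i ∈ Finset.Icc (j + 1) n,
                (1 - PowerSeries.C (q ^ i) * PowerSeries.X)) := by
    have := congrArg (Polynomial.coeToPowerSeries.ringHom (R := ℚ)) hpoly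
    simpa only [map_sum, map_mul, map_pow, map_prod, map_sub, map_one,
      Polynomial.coeToPowerSeries.ringHom_apply, Polynomial.coe_C, Polynomial.coe_X] using this
  have hE : (PowerSeries.mk fun k => ∏ i : Fin n, qbrkPos q ((k : ℤ) + c i - i)) * P
      = ∑ k ∈ Finset.range (n + 1),
          PowerSeries.C (qHit q n c (n - k)) * (PowerSeries.X : PowerSeries ℚ) ^ k := by
    rw [hmkf, Finset.sum_mul, Finset.sum_congr rfl hterm, hps]
  rw [← hE]
  have hunit : P * P⁻¹ = 1 := by
    apply PowerSeries.mul_inv_cancel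
    rw [hP, map_prod]
    have : ∀ i ∈ Finset.range (n + 1),
        PowerSeries.constantCoeff (1 - PowerSeries.C (q ^ i) * PowerSeries.X) = 1 := by
      intro i _
      simp
    rw [Finset.prod_congr rfl this, Finset.prod_const_one]
    exact one_ne_zero
  rw [mul_assoc, hunit, mul_one]
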